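/- Let X = X₁ ∪ X₂ with S = X₁ ∩ X₂, let K be a reproducing kernel on X with realization (H, φ), and for A ⊆ X let Π_A denote the orthogonal projection of H onto the closed linear span of {φ x : x ∈ A}. Suppose Π_S = Π_{X₁} ∘ Π_{X₂} = Π_{X₂} ∘ Π_{X₁} (i.e., K is the canonical completion of its restriction to (X₁ × X₁) ∪ (X₂ × X₂)). Then for every set S' with S ⊆ S' ⊆ X and all x ∈ X₁, y ∈ X₂, one has K(x,y) = ⟪Π_{S'}(φ x), Π_{S'}(φ y)⟫. (This is the separation property: any separator S' of x and y in the graph (X₁ × X₁) ∪ (X₂ × X₂) contains S, and K(x,y) = ⟨k_{x,S'}, k_{y,S'}⟩.) -/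

import Mathlib

open scoped RealInnerProductSpace

/-- A reproducing kernel on a set `X`. -/
def IsKernel {X : Type*} (K : X → X → ℝ) : Prop :=
  (∀ x y, K x y = K y x) ∧
  ∀ (n : ℕ) (α : Fin n → ℝ) (x : Fin n → X),
    0 ≤ ∑ i, ∑ j, α i * α j * K (x i) (x j)

/-- The orthogonal projection of `H` onto the closed linear span of `{φ x : x ∈ A}`, as a
continuous linear endomorphism of `H`. -/
noncomputable def spanProj {X H : Type*} [NormedAddCommGroup H]
    [InnerProductSpace ℝ H] [CompleteSpace H] (φ : X → H) (A : Set X) :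
    H →L[ℝ] H :=
  letI U : Submodule ℝ H := (Submodule.span ℝ (φ '' A)).topologicalClosure
  haveI : CompleteSpace U :=
    IsClosed.completeSpace_coe (hs := Submodule.isClosed_topologicalClosure _)
  U.subtypeL.comp (U.orthogonalProjectionOnto)

section Aux

variable {X H : Type*} [NormedAddCommGroup H] [InnerProductSpace ℝ H] [CompleteSpace H]
  (φ : X → H)

/-- The closed linear span of `{φ x : x ∈ A}`. -/
noncomputable def MM (φ : X → H) (A : Set X) : Submodule ℝ H :=
  (Submodule.span ℝ (φ '' A)).topologicalClosure

instance (A : Set X) : CompleteSpace (MM φ A) :=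
  IsClosed.completeSpace_coe (hs := Submodule.isClosed_topologicalClosure _)

lemma spanProj_apply (A : Set X) (v : H) :
    spanProj φ A v = ((MM φ A).orthogonalProjectionOnto v : H) := rfl

lemma mem_MM {A : Set X} {x : X} (hx : x ∈ A) : φ x ∈ MM φ A :=
  Submodule.le_topologicalClosure _ (Submodule.subset_span ⟨x, hx, rfl⟩)

lemma MM_mono {A B : Set X} (h : A ⊆ B) : MM φ A ≤ MM φ B :=
  Submodule.topologicalClosure_mono (Submodule.span_mono (Set.image_mono h))

lemma spanProj_mem (A : Set X) (v : H) : spanProj φ A v ∈ MM φ A := by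
  rw [spanProj_apply]; exact ((MM φ A).orthogonalProjectionOnto v).2

lemma spanProj_eq_self {A : Set X} {v : H} (hv : v ∈ MM φ A) : spanProj φ A v = v := by
  rw [spanProj_apply]; exact (Submodule.starProjection_eq_self_iff (K := MM φ A)).2 hv

lemma inner_spanProj (A : Set X) (u v : H) :
    ⟪spanProj φ A u, v⟫ = ⟪u, spanProj φ A v⟫ := by
  rw [spanProj_apply, spanProj_apply]
  exact Submodule.inner_starProjection_left_eq_right (K := MM φ A) u v

lemma sub_spanProj_inner (A : Set X) (v : H) {w : H} (hw : w ∈ MM φ A) :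
    ⟪v - spanProj φ A v, w⟫ = 0 := by
  rw [spanProj_apply]
  exact (Submodule.mem_orthogonal' _ _).1 (Submodule.sub_starProjection_mem_orthogonal (K := MM φ A) v) w hw

lemma spanProj_eq_of {A : Set X} {u v : H} (hu : u ∈ MM φ A)
    (h : ∀ w ∈ MM φ A, ⟪v - u, w⟫ = 0) : spanProj φ A v = u := by
  rw [spanProj_apply]; exact Submodule.eq_starProjection_of_mem_of_inner_eq_zero (K := MM φ A) hu h

lemma spanProj_eq_zero {A : Set X} {v : H} (h : ∀ w ∈ MM φ A, ⟪v, w⟫ = 0) :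
    spanProj φ A v = 0 :=
  spanProj_eq_of φ (Submodule.zero_mem _) (by simpa using h)

lemma forall_mem_MM_inner_eq_zero {A : Set X} {c : H}
    (h : ∀ s ∈ A, ⟪φ s, c⟫ = 0) : ∀ w ∈ MM φ A, ⟪w, c⟫ = 0 := by
  intro w hw
  have hker : MM φ A ≤ LinearMap.ker ((innerSL ℝ c : H →L[ℝ] ℝ) : H →ₗ[ℝ] ℝ) := by
    apply Submodule.topologicalClosure_minimal
    · rw [Submodule.span_le]
      rintro _ ⟨s, hs, rfl⟩
      simp only [SetLike.mem_coe, LinearMap.mem_ker, ContinuousLinearMap.coe_coe, innerSL_apply_apply]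
      rw [real_inner_comm]
      exact h s hs
    · exact ContinuousLinearMap.isClosed_ker _
  have h0 : innerSL ℝ c w = 0 := hker hw
  rw [innerSL_apply_apply] at h0
  rw [real_inner_comm]
  exact h0

/-- Key orthogonality: if `Π_{A∩B'} = Π_A ∘ Π_B` (pointwise), then every `b ∈ M_B` orthogonal to
`M_{S₀}` is orthogonal to all of `M_A`. -/
lemma key_perp {S₀ A B : Set X}
    (hc : ∀ v, spanProj φ S₀ v = spanProj φ A (spanProj φ B v))
    {b : H} (hb : b ∈ MM φ B) (hb0 : ∀ w ∈ MM φ S₀, ⟪b, w⟫ = 0)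
    {m : H} (hm : m ∈ MM φ A) : ⟪b, m⟫ = 0 := by
  have h1 : ⟪b, m⟫ = ⟪b, spanProj φ A m⟫ := by rw [spanProj_eq_self φ hm]
  have h2 : ⟪b, spanProj φ A m⟫ = ⟪spanProj φ A b, m⟫ := by
    rw [inner_spanProj, real_inner_comm, inner_spanProj, real_inner_comm]
  have h3 : spanProj φ A b = spanProj φ S₀ b := by
    rw [hc b, spanProj_eq_self φ hb]
  have h4 : spanProj φ S₀ b = 0 := by
    apply spanProj_eq_zero
    exact hb0
  rw [h1, h2, h3, h4, inner_zero_left]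

end Aux

/-- Separation property of the canonical completion: if
`Π_S = Π_{X₁} Π_{X₂} = Π_{X₂} Π_{X₁}` for `S = X₁ ∩ X₂`, then for every `S'` with
`S ⊆ S' ⊆ X` and all `x ∈ X₁`, `y ∈ X₂`, `K(x,y) = ⟪Π_{S'} (φ x), Π_{S'} (φ y)⟫`. -/
theorem canonical_completion_separation {X H : Type*}
    [NormedAddCommGroup H] [InnerProductSpace ℝ H] [CompleteSpace H]
    (X₁ X₂ : Set X) (hcover : X₁ ∪ X₂ = Set.univ)
    (K : X → X → ℝ) (hK : IsKernel K)
    (φ : X → H) (hφ : ∀ s t, ⟪φ s, φ t⟫ = K s t)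
    (hd : Dense (Submodule.span ℝ (Set.range φ) : Set H))
    (hcanon₁ : spanProj φ (X₁ ∩ X₂) = (spanProj φ X₁).comp (spanProj φ X₂))
    (hcanon₂ : spanProj φ (X₁ ∩ X₂) = (spanProj φ X₂).comp (spanProj φ X₁)) :
    ∀ S' : Set X, X₁ ∩ X₂ ⊆ S' →
      ∀ x ∈ X₁, ∀ y ∈ X₂,
        K x y = ⟪spanProj φ S' (φ x), spanProj φ S' (φ y)⟫ := by
  intro S' hS' x hx y hy
  have hc₁ : ∀ v, spanProj φ (X₁ ∩ X₂) v = spanProj φ X₁ (spanProj φ X₂ v) := fun v => by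
    rw [hcanon₁]; rfl
  have hc₂ : ∀ v, spanProj φ (X₁ ∩ X₂) v = spanProj φ X₂ (spanProj φ X₁ v) := fun v => by
    rw [hcanon₂]; rfl
  have hx1 : φ x ∈ MM φ X₁ := mem_MM φ hx
  have hy2 : φ y ∈ MM φ X₂ := mem_MM φ hy
  -- the projection `spanProj φ S'` maps `MM φ X₂` into itself
  have core : ∀ v, v ∈ MM φ X₂ → spanProj φ S' v ∈ MM φ X₂ := by
    intro v hv
    have hW2W : MM φ (S' ∩ X₂) ≤ MM φ S' := MM_mono φ Set.inter_subset_left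
    have hW2M2 : MM φ (S' ∩ X₂) ≤ MM φ X₂ := MM_mono φ Set.inter_subset_right
    have hSW2 : MM φ (X₁ ∩ X₂) ≤ MM φ (S' ∩ X₂) :=
      MM_mono φ (fun s hs => ⟨hS' hs, hs.2⟩)
    set u := spanProj φ (S' ∩ X₂) v with hu
    have huW2 : u ∈ MM φ (S' ∩ X₂) := spanProj_mem φ _ v
    have heq : spanProj φ S' v = u := by
      apply spanProj_eq_of φ (hW2W huW2)
      intro w hw
      rw [real_inner_comm]
      refine forall_mem_MM_inner_eq_zero φ ?_ w hw
      intro s hs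
      rw [real_inner_comm]
      rcases (by rw [hcover]; trivial : s ∈ X₁ ∪ X₂) with hsX1 | hsX2
      · -- `v - u ∈ M₂`, orthogonal to `M_{X₁∩X₂}`, hence orthogonal to `M₁ ∋ φ s`
        apply key_perp φ hc₁ (Submodule.sub_mem _ hv (hW2M2 huW2))
          (fun w hw => sub_spanProj_inner φ _ v (hSW2 hw)) (mem_MM φ hsX1)
      · exact sub_spanProj_inner φ _ v (mem_MM φ ⟨hs, hsX2⟩)
    rw [heq]
    exact hW2M2 huW2
  -- `a := φ x - Π_S (φ x)` is orthogonal to `M₂`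
  set a := φ x - spanProj φ (X₁ ∩ X₂) (φ x) with ha
  have haM1 : a ∈ MM φ X₁ :=
    Submodule.sub_mem _ hx1 (MM_mono φ Set.inter_subset_left (spanProj_mem φ _ _))
  have haS0 : ∀ w ∈ MM φ (X₁ ∩ X₂), ⟪a, w⟫ = 0 := fun w hw =>
    sub_spanProj_inner φ _ (φ x) hw
  have haM2 : ∀ m ∈ MM φ X₂, ⟪a, m⟫ = 0 := fun m hm =>
    key_perp φ hc₂ haM1 haS0 hm
  -- main computation
  have hP2 : ⟪spanProj φ S' (φ x), spanProj φ S' (φ y)⟫ = ⟪φ x, spanProj φ S' (φ y)⟫ := by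
    rw [inner_spanProj, spanProj_eq_self φ (spanProj_mem φ S' (φ y))]
  have hu0 : ⟪φ x, φ y - spanProj φ S' (φ y)⟫ = 0 := by
    have hsplit : φ x = spanProj φ (X₁ ∩ X₂) (φ x) + a := by rw [ha]; abel
    rw [hsplit, inner_add_left]
    have t1 : ⟪spanProj φ (X₁ ∩ X₂) (φ x), φ y - spanProj φ S' (φ y)⟫ = 0 := by
      rw [real_inner_comm]
      exact sub_spanProj_inner φ S' (φ y) (MM_mono φ hS' (spanProj_mem φ _ _))
    have t2 : ⟪a, φ y - spanProj φ S' (φ y)⟫ = 0 := by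
      rw [inner_sub_right, haM2 _ hy2, haM2 _ (core _ hy2), sub_zero]
    rw [t1, t2, add_zero]
  have : ⟪φ x, φ y⟫ = ⟪φ x, spanProj φ S' (φ y)⟫ := by
    have := hu0
    rw [inner_sub_right, sub_eq_zero] at this
    exact this
  rw [← hφ x y] at *
  rw [hP2, ← this]
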